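/- Let L ≥ 1, m_ℓ ≥ 1 for ℓ ∈ [L], U > 0, ε > 0, and let T be the ⌈2/ε⌉-th largest value of the multiset {U·m_1, …, U·m_L} (with T := 0 if ⌈2/ε⌉ > L). Consider the linear program: minimize ∑_{ℓ≤L} S^{(ℓ)} + τ/ε over reals S^{(1)}, …, S^{(L)}, τ subject to U·m_ℓ − 2S^{(ℓ)} ≤ τ and S^{(ℓ)} ≥ 0 for all ℓ ∈ [L], and τ ≥ 0. Then the point τ* := T, S^{(ℓ),*} := max{(U·m_ℓ − T)/2, 0} is feasible and optimal: every feasible point (S^{(1)}, …, S^{(L)}, τ) satisfies ∑_ℓ S^{(ℓ)} + τ/ε ≥ ∑_ℓ max{(U·m_ℓ − T)/2, 0} + T/ε. -/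

import Mathlib

open Finset

lemma countP_gt_le {l : List ℝ} (hl : l.Pairwise (· ≤ ·)) {j : ℕ} (hj : j < l.length)
    {x : ℝ} (hx : x = l[j]) :
    l.countP (fun y => decide (x < y)) ≤ l.length - (j + 1) := by
  conv_lhs => rw [← List.take_append_drop (j+1) l]
  rw [List.countP_append]
  have h1 : (l.take (j+1)).countP (fun y => decide (x < y)) = 0 := by
    rw [List.countP_eq_zero]
    intro z hz
    rcases List.mem_iff_getElem.1 hz with ⟨i, hi, rfl⟩
    have hi' : i < l.length := by
      have := hi; simp [List.length_take] at this; omega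
    have hij : i ≤ j := by
      have := hi; simp [List.length_take] at this; omega
    have : l[i] ≤ l[j] := by
      have := hl.rel_get_of_le (a := ⟨i, hi'⟩) (b := ⟨j, hj⟩) (by exact hij)
      simpa using this
    simp [List.getElem_take, hx]
    linarith
  have h2 : (l.drop (j+1)).countP (fun y => decide (x < y)) ≤ l.length - (j+1) := by
    calc _ ≤ (l.drop (j+1)).length := List.countP_le_length
    _ = l.length - (j+1) := List.length_drop
  omega

lemma le_countP_ge {l : List ℝ} (hl : l.Pairwise (· ≤ ·)) {j : ℕ} (hj : j < l.length)
    {x : ℝ} (hx : x = l[j]) :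
    l.length - j ≤ l.countP (fun y => decide (x ≤ y)) := by
  have hsub : (l.drop j).Sublist l := List.drop_sublist j l
  refine le_trans ?_ hsub.countP_le
  have heq : (l.drop j).countP (fun y => decide (x ≤ y)) = (l.drop j).length := by
    rw [List.countP_eq_length]
    intro z hz
    rcases List.mem_iff_getElem.1 hz with ⟨i, hi, rfl⟩
    have hji : j + i < l.length := by
      have := hi; simp [List.length_drop] at this; omega
    have : l[j] ≤ l[j+i] := by
      have := hl.rel_get_of_le (a := ⟨j, hj⟩) (b := ⟨j+i, hji⟩) (by simp)
      simpa using this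
    simp [List.getElem_drop, hx]
    exact this
  rw [heq, List.length_drop]


noncomputable def kthLargest {L : ℕ} (v : Fin L → ℝ) (k : ℕ) : ℝ :=
  (((Finset.univ.val.map v).sort (· ≤ ·)).reverse).getD (k - 1) 0

/-- the linear program in the proof of Theorem 2, case `d = 1`.
For the LP `minimize ∑_ℓ S^{(ℓ)} + τ/ε` subject to `U m_ℓ − 2 S^{(ℓ)} ≤ τ`, `S^{(ℓ)} ≥ 0`,
`τ ≥ 0`, the point `τ* = T`, `S^{(ℓ),*} = max{(U m_ℓ − T)/2, 0}` is feasible and optimal,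
where `T` is the `⌈2/ε⌉`-th largest value of `{U·m_1, …, U·m_L}` (with `T = 0` if
`⌈2/ε⌉ > L`). -/
theorem stmt6 {L : ℕ} (hL : 0 < L) (m : Fin L → ℕ) (hm : ∀ ℓ, 1 ≤ m ℓ)
    (U ε : ℝ) (hU : 0 < U) (hε : 0 < ε)
    (T : ℝ) (hT : T = kthLargest (fun ℓ => U * (m ℓ : ℝ)) ⌈(2 : ℝ) / ε⌉₊) :
    (∀ ℓ : Fin L, U * (m ℓ : ℝ) - 2 * max ((U * (m ℓ : ℝ) - T) / 2) 0 ≤ T) ∧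
    (∀ ℓ : Fin L, 0 ≤ max ((U * (m ℓ : ℝ) - T) / 2) 0) ∧ 0 ≤ T ∧
    (∀ (S : Fin L → ℝ) (τ : ℝ),
      (∀ ℓ, U * (m ℓ : ℝ) - 2 * S ℓ ≤ τ) → (∀ ℓ, 0 ≤ S ℓ) → 0 ≤ τ →
      (∑ ℓ, max ((U * (m ℓ : ℝ) - T) / 2) 0) + T / ε ≤ (∑ ℓ, S ℓ) + τ / ε) := by
  classical
  set a : Fin L → ℝ := fun ℓ => U * (m ℓ : ℝ) with ha
  set k : ℕ := ⌈(2 : ℝ) / ε⌉₊ with hk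
  set s : Multiset ℝ := Finset.univ.val.map a with hs
  set l : List ℝ := Multiset.sort s (· ≤ ·) with hl
  have hsort : l.Pairwise (· ≤ ·) := Multiset.pairwise_sort _ _
  have hls : (↑l : Multiset ℝ) = s := Multiset.sort_eq _ _
  have hlen : l.length = L := by
    have : Multiset.card (↑l : Multiset ℝ) = Multiset.card s := by rw [hls]
    simpa [hs] using this
  have hk1 : 1 ≤ k := Nat.one_le_iff_ne_zero.2 (by
    simp [hk, Nat.ceil_eq_zero, not_le]
    positivity)
  have hT' : T = l.reverse.getD (k-1) 0 := hT
  have hmem : ∀ x ∈ l, U ≤ x := by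
    intro x hx
    have hx' : x ∈ s := by rw [← hls]; exact hx
    rw [hs] at hx'
    rcases Multiset.mem_map.1 hx' with ⟨ℓ, _, rfl⟩
    have : (1 : ℝ) ≤ (m ℓ : ℝ) := by exact_mod_cast hm ℓ
    simpa [ha] using le_mul_of_one_le_right hU.le this
  have hT0 : 0 ≤ T := by
    rcases lt_or_ge (k-1) L with h | h
    · have hrev : k - 1 < l.reverse.length := by simpa [hlen] using h
      rw [hT', List.getD_eq_getElem _ _ hrev]
      have hmemrev : l.reverse[k-1] ∈ l := by
        have := List.getElem_mem hrev
        exact List.mem_reverse.1 this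
      linarith [hmem _ hmemrev]
    · rw [hT', List.getD_eq_default]
      · simp [hlen]; omega
  -- count identity
  have hcard : ∀ (p : ℝ → Prop) [DecidablePred p],
      ((univ.filter fun ℓ => p (a ℓ)).card) = l.countP (fun y => decide (p y)) := by
    intro p _
    rw [← Multiset.coe_countP, hls, hs, Multiset.countP_map]
    simp [Finset.card, Finset.filter]
  -- T = l[L-k] when k ≤ L
  have hTget : k ≤ L → ∀ (hj : L - k < l.length), T = l[L-k] := by
    intro hkL hj
    have hrev : k - 1 < l.reverse.length := by simp [hlen]; omega
    rw [hT', List.getD_eq_getElem _ _ hrev, List.getElem_reverse]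
    congr 1
    omega
  have hrw : ∀ ℓ : Fin L, U * (m ℓ : ℝ) = a ℓ := fun _ => rfl
  simp only [hrw]
  refine ⟨?_, ?_, hT0, ?_⟩
  · intro ℓ
    rcases le_total ((a ℓ - T)/2) 0 with h | h
    · rw [max_eq_right h]; have := hrw ℓ; linarith
    · rw [max_eq_left h]; have := hrw ℓ; linarith
  · intro ℓ; exact le_max_right _ _
  · intro S τ hc hS hτ
    have hc' : ∀ ℓ, a ℓ - 2 * S ℓ ≤ τ := hc
    have hSsum : (∑ ℓ, max ((a ℓ - τ) / 2) 0) ≤ ∑ ℓ, S ℓ := by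
      apply Finset.sum_le_sum
      intro ℓ _
      exact max_le (by linarith [hc' ℓ]) (hS ℓ)
    have key : (∑ ℓ, max ((a ℓ - T) / 2) 0) + T / ε ≤ (∑ ℓ, max ((a ℓ - τ) / 2) 0) + τ / ε := by
      rcases le_or_gt T τ with hcase | hcase
      · -- τ ≥ T : use count of strictly greater
        have hNgt : ((univ.filter fun ℓ => T < a ℓ).card : ℝ) ≤ 2/ε := by
          have hnat : (univ.filter fun ℓ => T < a ℓ).card ≤ k - 1 := by
            rcases le_or_gt k L with hkL | hkL
            · have hj : L - k < l.length := by omega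
              have := countP_gt_le hsort hj (hTget hkL hj)
              rw [hcard (fun y => T < y)]
              omega
            · calc (univ.filter fun ℓ => T < a ℓ).card ≤ (univ : Finset (Fin L)).card :=
                    Finset.card_le_card (Finset.filter_subset _ _)
                _ = L := by simp
                _ ≤ k - 1 := by omega
          have h2 : ((k - 1 : ℕ) : ℝ) < 2/ε := by
            rw [← Nat.lt_ceil]; omega
          calc ((univ.filter fun ℓ => T < a ℓ).card : ℝ) ≤ ((k-1 : ℕ) : ℝ) := by
                exact_mod_cast hnat
            _ ≤ 2/ε := h2.le
        have hpt : ∀ ℓ : Fin L, max ((a ℓ - T)/2) 0 ≤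
            max ((a ℓ - τ)/2) 0 + (if T < a ℓ then (τ - T)/2 else 0) := by
          intro ℓ
          rcases lt_or_ge T (a ℓ) with h | h
          · rw [if_pos h]
            refine max_le ?_ ?_
            · linarith [le_max_left ((a ℓ - τ)/2) 0]
            · linarith [le_max_right ((a ℓ - τ)/2) 0]
          · rw [if_neg (not_lt.2 h), add_zero, max_eq_right (by linarith)]
            exact le_max_right _ _
        have hsum : (∑ ℓ, max ((a ℓ - T)/2) 0) ≤
            (∑ ℓ, max ((a ℓ - τ)/2) 0) + ((univ.filter fun ℓ => T < a ℓ).card : ℝ) * ((τ - T)/2) := by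
          have := Finset.sum_le_sum (fun ℓ (_ : ℓ ∈ univ) => hpt ℓ)
          rw [Finset.sum_add_distrib, ← Finset.sum_filter, Finset.sum_const, nsmul_eq_mul] at this
          exact this
        have hmul : ((univ.filter fun ℓ => T < a ℓ).card : ℝ) * ((τ - T)/2) ≤ (2/ε) * ((τ - T)/2) :=
          mul_le_mul_of_nonneg_right hNgt (by linarith)
        have hfield : (2/ε) * ((τ - T)/2) + T/ε = τ/ε := by field_simp; ring
        linarith
      · -- τ < T : then T > 0 so k ≤ L, use count of ≥
        have hkL : k ≤ L := by
          by_contra hgt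
          have : T = 0 := by
            rw [hT', List.getD_eq_default]
            simp [hlen]; omega
          linarith
        have hj : L - k < l.length := by omega
        have hNge : 2/ε ≤ ((univ.filter fun ℓ => T ≤ a ℓ).card : ℝ) := by
          have hnat : k ≤ (univ.filter fun ℓ => T ≤ a ℓ).card := by
            have := le_countP_ge hsort hj (hTget hkL hj)
            rw [hcard (fun y => T ≤ y)]
            omega
          calc 2/ε ≤ (k : ℝ) := Nat.le_ceil _
            _ ≤ _ := by exact_mod_cast hnat
        have hpt : ∀ ℓ : Fin L, max ((a ℓ - T)/2) 0 + (if T ≤ a ℓ then (T - τ)/2 else 0) ≤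
            max ((a ℓ - τ)/2) 0 := by
          intro ℓ
          rcases le_or_gt T (a ℓ) with h | h
          · rw [if_pos h, max_eq_left (by linarith), max_eq_left (by linarith)]
            linarith
          · rw [if_neg (not_le.2 h), add_zero]
            exact max_le (le_trans (by linarith) (le_max_left ((a ℓ - τ)/2) 0)) (le_max_right _ _)
        have hsum : (∑ ℓ, max ((a ℓ - T)/2) 0) + ((univ.filter fun ℓ => T ≤ a ℓ).card : ℝ) * ((T - τ)/2)
            ≤ ∑ ℓ, max ((a ℓ - τ)/2) 0 := by
          have := Finset.sum_le_sum (fun ℓ (_ : ℓ ∈ univ) => hpt ℓ)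
          rw [Finset.sum_add_distrib, ← Finset.sum_filter, Finset.sum_const, nsmul_eq_mul] at this
          exact this
        have hmul : (2/ε) * ((T - τ)/2) ≤ ((univ.filter fun ℓ => T ≤ a ℓ).card : ℝ) * ((T - τ)/2) :=
          mul_le_mul_of_nonneg_right hNge (by linarith)
        have hfield : (2/ε) * ((T - τ)/2) + τ/ε = T/ε := by field_simp; ring
        linarith
    linarith
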